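/- Let μ be a probability measure on ℝ^D with mean c and covariance operator cov. For any affine d-dimensional subspace Π with orthogonal projection P_Π, the minimum of ∫‖x - P_Π(x)‖² dμ(x) over all such Π equals the sum of the eigenvalues λ_{d+1} + ... + λ_D of cov (eigenvalues listed in decreasing order with multiplicity). -/

import Mathlib

open MeasureTheory Module

section helpers

lemma card_filter_le {D d : ℕ} :
    (Finset.univ.filter (fun l : Fin D => d ≤ (l : ℕ))).card = D - d := by
  have h1 : (Finset.univ.filter (fun l : Fin D => d ≤ (l : ℕ))).card
      = ∑ l : Fin D, if d ≤ (l : ℕ) then 1 else 0 := by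
    rw [Finset.card_filter]
  rw [h1, Fin.sum_univ_eq_sum_range (fun l => if d ≤ l then 1 else 0) D,
    ← Finset.card_filter]
  have h2 : (Finset.range D).filter (fun l => d ≤ l) = Finset.Ico d D := by
    ext x; simp [Finset.mem_filter, Finset.mem_Ico, and_comm]
  rw [h2, Nat.card_Ico]

lemma kyfan {D d : ℕ} (hd : d ≤ D) (lam : Fin D → ℝ) (hdec : Antitone lam)
    (t : Fin D → ℝ) (ht0 : ∀ i, 0 ≤ t i) (ht1 : ∀ i, t i ≤ 1)
    (hts : ∑ i, t i = (D - d : ℕ)) :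
    (∑ l ∈ Finset.univ.filter (fun l : Fin D => d ≤ (l : ℕ)), lam l) ≤ ∑ i, lam i * t i := by
  rcases eq_or_lt_of_le hd with rfl | hlt
  · have h1 : (Finset.univ.filter (fun l : Fin d => d ≤ (l : ℕ))) = ∅ := by
      ext l; simp [Nat.not_le.mpr l.isLt]
    have h2 : ∀ i : Fin d, t i = 0 := by
      intro i
      have hz : ∑ i : Fin d, t i = 0 := by rw [hts]; simp
      have := (Finset.sum_eq_zero_iff_of_nonneg (fun i _ => ht0 i)).mp hz
      exact this i (Finset.mem_univ i)
    rw [h1, Finset.sum_empty]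
    have : ∑ i : Fin d, lam i * t i = 0 :=
      Finset.sum_eq_zero (fun i _ => by rw [h2 i, mul_zero])
    rw [this]
  · set m := lam ⟨d, hlt⟩ with hm
    set S := Finset.univ.filter (fun l : Fin D => d ≤ (l : ℕ)) with hS
    have hsplit : ∑ i, lam i * t i - ∑ l ∈ S, lam l
        = ∑ i ∈ Sᶜ, lam i * t i + ∑ i ∈ S, lam i * (t i - 1) := by
      rw [← Finset.sum_compl_add_sum S (fun i => lam i * t i)]
      simp only [mul_sub, mul_one, Finset.sum_sub_distrib]
      ring
    have hA : ∑ i ∈ Sᶜ, m * t i ≤ ∑ i ∈ Sᶜ, lam i * t i := by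
      refine Finset.sum_le_sum (fun i hi => ?_)
      have hi' : (i : ℕ) < d := by
        rw [hS] at hi; simp only [Finset.mem_compl, Finset.mem_filter, Finset.mem_univ,
          true_and, not_le] at hi; exact hi
      exact mul_le_mul_of_nonneg_right (hdec (by rw [Fin.le_def]; simp; omega)) (ht0 i)
    have hB : ∑ i ∈ S, m * (t i - 1) ≤ ∑ i ∈ S, lam i * (t i - 1) := by
      refine Finset.sum_le_sum (fun i hi => ?_)
      have hi' : d ≤ (i : ℕ) := by
        rw [hS] at hi; simpa using hi
      have hlam : lam i ≤ m := hdec (by rw [Fin.le_def]; simpa using hi')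
      nlinarith [ht1 i]
    have hcard : S.card = D - d := card_filter_le
    have hsum : ∑ i ∈ Sᶜ, m * t i + ∑ i ∈ S, m * (t i - 1)
        = m * ((∑ i, t i) - S.card) := by
      rw [← Finset.sum_compl_add_sum S t]
      simp only [mul_sub, mul_one, Finset.sum_sub_distrib, Finset.sum_const,
        nsmul_eq_mul]
      rw [mul_add, Finset.mul_sum, Finset.mul_sum]; ring
    have : (0:ℝ) ≤ ∑ i, lam i * t i - ∑ l ∈ S, lam l := by
      rw [hsplit]
      have := add_le_add hA hB
      rw [hsum, hts, hcard] at this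
      simpa using this
    linarith

variable {D : ℕ}

lemma integrable_inner_sq (μ : Measure (EuclideanSpace ℝ (Fin D))) [IsProbabilityMeasure μ]
    (hμ : Integrable (fun x => ‖x‖ ^ 2) μ) (p f : EuclideanSpace ℝ (Fin D)) :
    Integrable (fun x : EuclideanSpace ℝ (Fin D) => (inner ℝ (x - p) f : ℝ)^2) μ := by
  have hg : Integrable (fun x : EuclideanSpace ℝ (Fin D) =>
      (2*‖f‖^2) * ‖x‖^2 + ‖f‖^2*(2*‖p‖^2)) μ :=
    (hμ.const_mul _).add (integrable_const _)
  refine hg.mono' ?_ ?_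
  · exact (Continuous.inner (continuous_id.sub continuous_const) continuous_const).pow 2
      |>.aestronglyMeasurable
  · refine Filter.Eventually.of_forall (fun x => ?_)
    have h1 : |(inner ℝ (x - p) f : ℝ)| ≤ ‖x - p‖ * ‖f‖ := abs_real_inner_le_norm _ _
    have h2 : ‖x - p‖ ≤ ‖x‖ + ‖p‖ := norm_sub_le _ _
    have h3 : (0:ℝ) ≤ ‖f‖ := norm_nonneg _
    have h4 : (0:ℝ) ≤ ‖x - p‖ := norm_nonneg _
    have e1 : (inner ℝ (x - p) f : ℝ)^2 ≤ (‖x - p‖ * ‖f‖)^2 := by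
      rw [← sq_abs]
      exact pow_le_pow_left₀ (abs_nonneg _) h1 2
    have e2 : ‖x - p‖^2 ≤ (‖x‖ + ‖p‖)^2 := pow_le_pow_left₀ h4 h2 2
    rw [Real.norm_eq_abs, abs_pow, ← abs_pow, abs_sq]
    nlinarith [sq_nonneg (‖x‖ - ‖p‖), sq_nonneg ‖f‖]

lemma integrable_inner' (μ : Measure (EuclideanSpace ℝ (Fin D))) [IsProbabilityMeasure μ]
    (hμ : Integrable (fun x => ‖x‖ ^ 2) μ) (p f : EuclideanSpace ℝ (Fin D)) :
    Integrable (fun x : EuclideanSpace ℝ (Fin D) => (inner ℝ (x - p) f : ℝ)) μ := by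
  have hg : Integrable (fun x : EuclideanSpace ℝ (Fin D) => ‖f‖ * ‖x‖^2 + ‖f‖*(1 + ‖p‖)) μ :=
    (hμ.const_mul _).add (integrable_const _)
  refine hg.mono' ?_ ?_
  · exact (Continuous.inner (continuous_id.sub continuous_const)
      continuous_const).aestronglyMeasurable
  · refine Filter.Eventually.of_forall (fun x => ?_)
    have h1 : |(inner ℝ (x - p) f : ℝ)| ≤ ‖x - p‖ * ‖f‖ := abs_real_inner_le_norm _ _
    have h2 : ‖x - p‖ ≤ ‖x‖ + ‖p‖ := norm_sub_le _ _
    have h3 : (0:ℝ) ≤ ‖f‖ := norm_nonneg _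
    have h5 : ‖x‖ ≤ 1 + ‖x‖^2 := by nlinarith [sq_nonneg (‖x‖ - 1)]
    rw [Real.norm_eq_abs]
    nlinarith [norm_nonneg x, norm_nonneg p]

lemma integrable_id' (μ : Measure (EuclideanSpace ℝ (Fin D))) [IsProbabilityMeasure μ]
    (hμ : Integrable (fun x => ‖x‖ ^ 2) μ) :
    Integrable (fun x : EuclideanSpace ℝ (Fin D) => x) μ := by
  have hg : Integrable (fun x : EuclideanSpace ℝ (Fin D) => 1 + ‖x‖^2) μ :=
    (integrable_const _).add hμ
  refine hg.mono' continuous_id.aestronglyMeasurable ?_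
  refine Filter.Eventually.of_forall (fun x => ?_)
  nlinarith [sq_nonneg (‖x‖ - 1), norm_nonneg x]

lemma integral_inner_sub_mean (μ : Measure (EuclideanSpace ℝ (Fin D))) [IsProbabilityMeasure μ]
    (hμ : Integrable (fun x => ‖x‖ ^ 2) μ) (c : EuclideanSpace ℝ (Fin D))
    (hc : c = ∫ x, x ∂μ) (f : EuclideanSpace ℝ (Fin D)) :
    ∫ x, (inner ℝ (x - c) f : ℝ) ∂μ = 0 := by
  have hint : Integrable (fun x : EuclideanSpace ℝ (Fin D) => x - c) μ :=
    (integrable_id' μ hμ).sub (integrable_const c)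
  have h1 : ∫ x, (inner ℝ f (x - c) : ℝ) ∂μ = (inner ℝ f (∫ x, (x - c) ∂μ) : ℝ) :=
    integral_inner hint f
  have h2 : ∫ x, (x - c) ∂μ = 0 := by
    rw [integral_sub (integrable_id' μ hμ) (integrable_const c), integral_const]
    simp [← hc]
  simp only [real_inner_comm]
  rw [h1, h2, inner_zero_right]

lemma int_sq_shift (μ : Measure (EuclideanSpace ℝ (Fin D))) [IsProbabilityMeasure μ]
    (c : EuclideanSpace ℝ (Fin D))
    (cov : EuclideanSpace ℝ (Fin D) →ₗ[ℝ] EuclideanSpace ℝ (Fin D))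
    (hcov : ∀ u v, (inner ℝ (cov u) v : ℝ) = ∫ x, (inner ℝ (x - c) u : ℝ) * (inner ℝ (x - c) v : ℝ) ∂μ)
    (hintsq : ∀ p f : EuclideanSpace ℝ (Fin D),
      Integrable (fun x : EuclideanSpace ℝ (Fin D) => (inner ℝ (x - p) f : ℝ)^2) μ)
    (hint1 : ∀ p f : EuclideanSpace ℝ (Fin D),
      Integrable (fun x : EuclideanSpace ℝ (Fin D) => (inner ℝ (x - p) f : ℝ)) μ)
    (hmean : ∀ f : EuclideanSpace ℝ (Fin D), ∫ x, (inner ℝ (x - c) f : ℝ) ∂μ = 0)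
    (p f : EuclideanSpace ℝ (Fin D)) :
    ∫ x, (inner ℝ (x - p) f : ℝ)^2 ∂μ
      = (inner ℝ (cov f) f : ℝ) + (inner ℝ (c - p) f : ℝ)^2 := by
  set a : ℝ := (inner ℝ (c - p) f : ℝ) with ha
  have hpt : (fun x : EuclideanSpace ℝ (Fin D) => (inner ℝ (x - p) f : ℝ)^2)
      = fun x : EuclideanSpace ℝ (Fin D) =>
        (inner ℝ (x - c) f : ℝ)^2 + (2*a)*(inner ℝ (x - c) f : ℝ) + a^2 := by
    funext x
    have : (inner ℝ (x - p) f : ℝ) = (inner ℝ (x - c) f : ℝ) + a := by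
      rw [ha, ← inner_add_left]
      congr 1
      abel
    rw [this]; ring
  rw [hpt]
  have hI2 : Integrable (fun x : EuclideanSpace ℝ (Fin D) =>
      (2*a)*(inner ℝ (x - c) f : ℝ)) μ := (hint1 c f).const_mul (2*a)
  have hI12 : Integrable (fun x : EuclideanSpace ℝ (Fin D) => (inner ℝ (x - c) f : ℝ)^2
      + (2*a)*(inner ℝ (x - c) f : ℝ)) μ := (hintsq c f).add hI2
  rw [integral_add hI12 (integrable_const _)]
  rw [integral_add (hintsq c f) hI2, integral_const_mul, hmean f, integral_const]
  have hcf : (inner ℝ (cov f) f : ℝ) = ∫ x, (inner ℝ (x - c) f : ℝ)^2 ∂μ := by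
    rw [hcov f f]
    exact integral_congr_ae (Filter.Eventually.of_forall fun x => (pow_two _).symm)
  rw [← hcf]
  simp

lemma cov_quadform (c : EuclideanSpace ℝ (Fin D))
    (μ : Measure (EuclideanSpace ℝ (Fin D))) [IsProbabilityMeasure μ]
    (cov : EuclideanSpace ℝ (Fin D) →ₗ[ℝ] EuclideanSpace ℝ (Fin D))
    (hcov : ∀ u v, (inner ℝ (cov u) v : ℝ) = ∫ x, (inner ℝ (x - c) u : ℝ) * (inner ℝ (x - c) v : ℝ) ∂μ)
    (B : OrthonormalBasis (Fin D) ℝ (EuclideanSpace ℝ (Fin D)))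
    (b : Fin D → EuclideanSpace ℝ (Fin D)) (hBb : ∀ i, B i = b i)
    (lam : Fin D → ℝ) (heig : ∀ i, cov (b i) = lam i • b i) (g : EuclideanSpace ℝ (Fin D)) :
    (inner ℝ (cov g) g : ℝ) = ∑ i, lam i * (inner ℝ (b i) g : ℝ)^2 := by
  have h1 : ∑ i, (inner ℝ (cov g) (B i) : ℝ) * (inner ℝ (B i) g : ℝ) = (inner ℝ (cov g) g : ℝ) :=
    B.sum_inner_mul_inner (cov g) g
  rw [← h1]
  refine Finset.sum_congr rfl fun i _ => ?_
  have h2 : (inner ℝ (cov g) (b i) : ℝ) = (inner ℝ (cov (b i)) g : ℝ) := by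
    rw [hcov g (b i), hcov (b i) g]
    exact integral_congr_ae (Filter.Eventually.of_forall fun x => mul_comm _ _)
  rw [hBb i, h2, heig i, real_inner_smul_left, sq]
  ring

lemma proj_norm_sq (K : Submodule ℝ (EuclideanSpace ℝ (Fin D)))
    {ι : Type*} [Fintype ι] (f : OrthonormalBasis ι ℝ K) (z : EuclideanSpace ℝ (Fin D)) :
    ‖((K.orthogonalProjectionOnto z : EuclideanSpace ℝ (Fin D)))‖^2
      = ∑ j, (inner ℝ ((f j : EuclideanSpace ℝ (Fin D))) z : ℝ)^2 := by
  set v : K := K.orthogonalProjectionOnto z with hv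
  have h1 : ‖(v : EuclideanSpace ℝ (Fin D))‖^2 = ‖v‖^2 := by rw [Submodule.norm_coe]
  have h2 : ∑ j, (inner ℝ v (f j) : ℝ) * (inner ℝ (f j) v : ℝ) = (inner ℝ v v : ℝ) :=
    f.sum_inner_mul_inner v v
  have h3 : ‖v‖^2 = ∑ j, (inner ℝ (f j) v : ℝ)^2 := by
    rw [← real_inner_self_eq_norm_sq, ← h2]
    exact Finset.sum_congr rfl fun j _ => by rw [real_inner_comm v (f j), sq]
  have h4 : ∀ j, (inner ℝ (f j) v : ℝ)
      = (inner ℝ ((f j : EuclideanSpace ℝ (Fin D))) z : ℝ) := by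
    intro j
    rw [Submodule.coe_inner]
    have h5 : z - (v : EuclideanSpace ℝ (Fin D)) ∈ Kᗮ :=
      Submodule.sub_starProjection_mem_orthogonal (K := K) z
    have h6 : (inner ℝ ((f j : EuclideanSpace ℝ (Fin D)))
        (z - (v : EuclideanSpace ℝ (Fin D))) : ℝ) = 0 :=
      (Submodule.mem_orthogonal K _).mp h5 _ (f j).2
    rw [inner_sub_right] at h6
    linarith
  rw [h1, h3]
  exact Finset.sum_congr rfl fun j _ => by rw [h4 j]

end helpers

theorem stmt3 {D d : ℕ} (hd : d ≤ D)
    (μ : Measure (EuclideanSpace ℝ (Fin D))) [IsProbabilityMeasure μ]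
    (hμ : Integrable (fun x => ‖x‖ ^ 2) μ)
    (c : EuclideanSpace ℝ (Fin D)) (hc : c = ∫ x, x ∂μ)
    (cov : EuclideanSpace ℝ (Fin D) →ₗ[ℝ] EuclideanSpace ℝ (Fin D))
    (hcov : ∀ u v, (inner ℝ (cov u) v : ℝ) = ∫ x, (inner ℝ (x - c) u : ℝ) * (inner ℝ (x - c) v : ℝ) ∂μ)
    (b : Fin D → EuclideanSpace ℝ (Fin D)) (hb : Orthonormal ℝ b)
    (lam : Fin D → ℝ) (hdec : Antitone lam)
    (heig : ∀ i, cov (b i) = lam i • b i) :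
    IsLeast
      {e : ℝ | ∃ (p : EuclideanSpace ℝ (Fin D)) (W : Submodule ℝ (EuclideanSpace ℝ (Fin D))),
        finrank ℝ W = d ∧
        e = ∫ x, ‖x - (((W.orthogonalProjectionOnto (x - p)) : EuclideanSpace ℝ (Fin D)) + p)‖ ^ 2 ∂μ}
      (∑ l ∈ Finset.univ.filter (fun l : Fin D => d ≤ (l : ℕ)), lam l) := by
  classical
  have hintsq := integrable_inner_sq μ hμ
  have hint1 := integrable_inner' μ hμ
  have hmean := integral_inner_sub_mean μ hμ c hc
  have hshift := int_sq_shift μ c cov hcov hintsq hint1 hmean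
  -- the full orthonormal basis
  have hsp : ⊤ ≤ Submodule.span ℝ (Set.range b) := by
    rw [hb.linearIndependent.span_eq_top_of_card_eq_finrank'
      (by simp [finrank_euclideanSpace_fin])]
  set B := OrthonormalBasis.mk hb hsp with hBdef
  have hBb : ∀ i, B i = b i := fun i => by rw [hBdef, OrthonormalBasis.coe_mk]
  have hquad := cov_quadform c μ cov hcov B b hBb lam heig
  set S := Finset.univ.filter (fun l : Fin D => d ≤ (l : ℕ)) with hS
  -- eigenvalue as an integral
  have heigval : ∀ i, ∫ x, (inner ℝ (x - c) (b i) : ℝ)^2 ∂μ = lam i := by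
    intro i
    have h1 : (inner ℝ (cov (b i)) (b i) : ℝ) = lam i := by
      rw [heig i, real_inner_smul_left, real_inner_self_eq_norm_sq, hb.1 i]
      simp
    have h2 : ∫ x, (inner ℝ (x - c) (b i) : ℝ)^2 ∂μ
        = (inner ℝ (cov (b i)) (b i) : ℝ) + (inner ℝ (c - c) (b i) : ℝ)^2 := hshift c (b i)
    rw [h2, h1]
    simp
  constructor
  · -- membership
    set v : Fin d → EuclideanSpace ℝ (Fin D) := fun i => b (Fin.castLE hd i) with hvdef
    have hvon : Orthonormal ℝ v := hb.comp _ (Fin.castLE_injective hd)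
    set W := Submodule.span ℝ (Set.range v) with hWdef
    refine ⟨c, W, ?_, ?_⟩
    · rw [hWdef, finrank_span_eq_card hvon.linearIndependent]
      simp
    · -- compute the error
      have hexp : ∀ y : EuclideanSpace ℝ (Fin D),
          ∑ i, (inner ℝ (b i) y : ℝ) • b i = y := by
        intro y
        have := B.sum_repr' y
        simp_rw [hBb] at this
        exact this
      have hrem : ∀ y : EuclideanSpace ℝ (Fin D),
          y - ∑ i ∈ Sᶜ, (inner ℝ (b i) y : ℝ) • b i
            = ∑ i ∈ S, (inner ℝ (b i) y : ℝ) • b i := by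
        intro y
        nth_rewrite 1 [← hexp y]
        rw [← Finset.sum_compl_add_sum S (fun i => (inner ℝ (b i) y : ℝ) • b i)]
        abel
      have hproj : ∀ y : EuclideanSpace ℝ (Fin D),
          y - (W.orthogonalProjectionOnto y : EuclideanSpace ℝ (Fin D))
            = ∑ i ∈ S, (inner ℝ (b i) y : ℝ) • b i := by
        intro y
        have hw : (W.orthogonalProjectionOnto y : EuclideanSpace ℝ (Fin D))
            = ∑ i ∈ Sᶜ, (inner ℝ (b i) y : ℝ) • b i := by
          rw [← Submodule.starProjection_apply]
          apply Submodule.eq_starProjection_of_mem_of_inner_eq_zero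
          · refine Submodule.sum_mem _ fun i hi => Submodule.smul_mem _ _ ?_
            have hi' : (i:ℕ) < d := by
              rw [hS] at hi
              simp only [Finset.mem_compl, Finset.mem_filter, Finset.mem_univ, true_and,
                not_le] at hi
              exact hi
            have hbv : b i = v ⟨(i:ℕ), hi'⟩ := rfl
            rw [hbv, hWdef]
            exact Submodule.subset_span ⟨_, rfl⟩
          · intro w hw
            rw [hrem y, sum_inner]
            refine Finset.sum_eq_zero fun i hi => ?_
            have hi' : d ≤ (i:ℕ) := by rw [hS] at hi; simpa using hi
            rw [real_inner_smul_left]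
            have hbw : (inner ℝ (b i) w : ℝ) = 0 := by
              rw [hWdef] at hw
              induction hw using Submodule.span_induction with
              | mem u hu =>
                obtain ⟨j, rfl⟩ := hu
                refine hb.2 fun hij => ?_
                have h1 : (i : ℕ) = ((Fin.castLE hd j : Fin D) : ℕ) := by rw [hij]
                have h2 : ((Fin.castLE hd j : Fin D) : ℕ) = (j : ℕ) := rfl
                have h3 := j.isLt
                omega
              | zero => simp
              | add u u' hu hu' ihu ihu' => rw [inner_add_right, ihu, ihu']; ring
              | smul a u hu ih => rw [inner_smul_right, ih]; ring
            rw [hbw]; ring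
        rw [hw]
        exact hrem y
      have hnorm : ∀ y : EuclideanSpace ℝ (Fin D),
          ‖∑ i ∈ S, (inner ℝ (b i) y : ℝ) • b i‖^2 = ∑ i ∈ S, (inner ℝ (b i) y : ℝ)^2 := by
        intro y
        have h := hb.inner_sum (fun i => (inner ℝ (b i) y : ℝ)) (fun i => (inner ℝ (b i) y : ℝ)) S
        rw [← real_inner_self_eq_norm_sq, h]
        exact Finset.sum_congr rfl fun i _ => by
          simp [starRingEnd_apply, sq]
      have hfun : (fun x : EuclideanSpace ℝ (Fin D) =>
            ‖x - ((W.orthogonalProjectionOnto (x - c) : EuclideanSpace ℝ (Fin D)) + c)‖^2)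
          = fun x => ∑ i ∈ S, (inner ℝ (b i) (x - c) : ℝ)^2 := by
        funext x
        have h0 : x - ((W.orthogonalProjectionOnto (x - c) : EuclideanSpace ℝ (Fin D)) + c)
            = (x - c) - (W.orthogonalProjectionOnto (x - c) : EuclideanSpace ℝ (Fin D)) := by
          abel
        rw [h0, hproj (x - c), hnorm (x - c)]
      rw [hfun]
      have hInt : ∀ i ∈ S, Integrable
          (fun x : EuclideanSpace ℝ (Fin D) => (inner ℝ (b i) (x - c) : ℝ)^2) μ := by
        intro i _
        refine (hintsq c (b i)).congr (Filter.Eventually.of_forall fun x => ?_)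
        simp only []
        rw [real_inner_comm]
      rw [integral_finset_sum S hInt]
      refine (Finset.sum_congr rfl fun i _ => ?_).symm
      rw [← heigval i]
      exact integral_congr_ae (Filter.Eventually.of_forall fun x => by
        simp only []
        rw [real_inner_comm])
  · -- lower bound
    rintro e ⟨p, W, hWr, rfl⟩
    have hKr : finrank ℝ (Wᗮ) = D - d := by
      have h := Submodule.finrank_add_finrank_orthogonal (𝕜 := ℝ) W
      rw [hWr, finrank_euclideanSpace_fin] at h
      omega
    set f := stdOrthonormalBasis ℝ (Wᗮ : Submodule ℝ (EuclideanSpace ℝ (Fin D))) with hfdef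
    set g : Fin (finrank ℝ (Wᗮ : Submodule ℝ (EuclideanSpace ℝ (Fin D)))) →
        EuclideanSpace ℝ (Fin D) := fun j => (f j : EuclideanSpace ℝ (Fin D)) with hgdef
    have hgon : Orthonormal ℝ g :=
      f.orthonormal.comp_linearIsometry (Wᗮ : Submodule ℝ (EuclideanSpace ℝ (Fin D))).subtypeₗᵢ
    have hfun : (fun x : EuclideanSpace ℝ (Fin D) =>
          ‖x - ((W.orthogonalProjectionOnto (x - p) : EuclideanSpace ℝ (Fin D)) + p)‖^2)
        = fun x => ∑ j, (inner ℝ (g j) (x - p) : ℝ)^2 := by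
      funext x
      have h0 : x - ((W.orthogonalProjectionOnto (x - p) : EuclideanSpace ℝ (Fin D)) + p)
          = (x - p) - (W.orthogonalProjectionOnto (x - p) : EuclideanSpace ℝ (Fin D)) := by
        abel
      have h1 : (x - p) - (W.orthogonalProjectionOnto (x - p) : EuclideanSpace ℝ (Fin D))
          = (Wᗮ.orthogonalProjectionOnto (x - p) : EuclideanSpace ℝ (Fin D)) := by
        rw [sub_eq_iff_eq_add']
        exact (Submodule.starProjection_add_starProjection_orthogonal (K := W) (x - p)).symm
      rw [h0, h1, proj_norm_sq _ f]
    rw [hfun]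
    have hInt : ∀ j, Integrable
        (fun x : EuclideanSpace ℝ (Fin D) => (inner ℝ (g j) (x - p) : ℝ)^2) μ := by
      intro j
      refine (hintsq p (g j)).congr (Filter.Eventually.of_forall fun x => ?_)
      simp only []
      rw [real_inner_comm]
    rw [integral_finset_sum _ (fun j _ => hInt j)]
    -- each term is at least the covariance quadratic form
    have hterm : ∀ j, (inner ℝ (cov (g j)) (g j) : ℝ) ≤ ∫ x, (inner ℝ (g j) (x - p) : ℝ)^2 ∂μ := by
      intro j
      have h1 : ∫ x, (inner ℝ (g j) (x - p) : ℝ)^2 ∂μ = ∫ x, (inner ℝ (x - p) (g j) : ℝ)^2 ∂μ :=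
        integral_congr_ae (Filter.Eventually.of_forall fun x => by
          simp only []
          rw [real_inner_comm])
      rw [h1, hshift p (g j)]
      nlinarith [sq_nonneg (inner ℝ (c - p) (g j) : ℝ)]
    set t : Fin D → ℝ := fun i => ∑ j, (inner ℝ (b i) (g j) : ℝ)^2 with htdef
    have h2 : ∑ j, (inner ℝ (cov (g j)) (g j) : ℝ)
        ≤ ∑ j, ∫ x, (inner ℝ (g j) (x - p) : ℝ)^2 ∂μ :=
      Finset.sum_le_sum (fun j _ => hterm j)
    have h3 : ∑ j, (inner ℝ (cov (g j)) (g j) : ℝ) = ∑ i, lam i * t i := by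
      calc ∑ j, (inner ℝ (cov (g j)) (g j) : ℝ)
          = ∑ j, ∑ i, lam i * (inner ℝ (b i) (g j) : ℝ)^2 :=
            Finset.sum_congr rfl fun j _ => hquad (g j)
        _ = ∑ i, ∑ j, lam i * (inner ℝ (b i) (g j) : ℝ)^2 := Finset.sum_comm
        _ = ∑ i, lam i * t i := by
            refine Finset.sum_congr rfl fun i _ => ?_
            rw [htdef, Finset.mul_sum]
    have ht0 : ∀ i, 0 ≤ t i := fun i => Finset.sum_nonneg fun j _ => sq_nonneg _
    have ht1 : ∀ i, t i ≤ 1 := by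
      intro i
      have hbess := hgon.sum_inner_products_le (s := Finset.univ) (b i)
      have hbi : ‖b i‖ ^ 2 = 1 := by rw [hb.1 i]; norm_num
      rw [hbi] at hbess
      have : t i = ∑ j, ‖(inner ℝ (g j) (b i) : ℝ)‖^2 := by
        refine Finset.sum_congr rfl fun j _ => ?_
        rw [Real.norm_eq_abs, sq_abs, real_inner_comm]
      rw [this]
      exact hbess
    have hts : ∑ i, t i = ((D - d : ℕ) : ℝ) := by
      have h4 : ∀ j, ∑ i, (inner ℝ (b i) (g j) : ℝ)^2 = 1 := by
        intro j
        have h5 := B.sum_inner_mul_inner (g j) (g j)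
        have h6 : ∑ i, (inner ℝ (b i) (g j) : ℝ)^2
            = ∑ i, (inner ℝ (g j) (B i) : ℝ) * (inner ℝ (B i) (g j) : ℝ) := by
          refine Finset.sum_congr rfl fun i _ => ?_
          rw [hBb, real_inner_comm (g j) (b i), sq]
        rw [h6, h5, real_inner_self_eq_norm_sq, hgon.1 j]
        norm_num
      calc ∑ i, t i = ∑ j, ∑ i : Fin D, (inner ℝ (b i) (g j) : ℝ)^2 := Finset.sum_comm
        _ = ∑ j : Fin (finrank ℝ (Wᗮ : Submodule ℝ (EuclideanSpace ℝ (Fin D)))), (1:ℝ) :=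
            Finset.sum_congr rfl fun j _ => h4 j
        _ = ((D - d : ℕ) : ℝ) := by simp [hKr]
    have h7 := kyfan hd lam hdec t ht0 ht1 hts
    calc (∑ l ∈ S, lam l) ≤ ∑ i, lam i * t i := h7
      _ = ∑ j, (inner ℝ (cov (g j)) (g j) : ℝ) := h3.symm
      _ ≤ ∑ j, ∫ x, (inner ℝ (g j) (x - p) : ℝ)^2 ∂μ := h2
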